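/- arXiv:2006.00061 — 2 statements merged into one kernel-verified Lean document; each statement's English description precedes it below -/
import Mathlib

section
/- Let G be a graph whose vertex set consists of a clique C of odd size and an independent set S, such that every vertex of S is adjacent to every vertex of C and no other vertices. Then in any maximum cut (A,B) of G, all vertices of S lie in the same part. -/
/-- The size of the cut determined by the vertex set `A` (and its complement):
the number of edges with one endpoint in `A` and the other outside `A`. -/
noncomputable def cutSize {V : Type*} (G : SimpleGraph V) (A : Set V) : ℕ :=
  {e ∈ G.edgeSet | ∃ u ∈ A, ∃ v ∈ Aᶜ, e = s(u, v)}.ncard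

/-- `A` (together with its complement) is a maximum cut of `G`. -/
def IsMaxCut {V : Type*} (G : SimpleGraph V) (A : Set V) : Prop :=
  ∀ B : Set V, cutSize G B ≤ cutSize G A

lemma ncard_sep_split {α : Type*} [Finite α] (t : Set α) (p : α → Prop) :
    t.ncard = {x ∈ t | ¬ p x}.ncard + {x ∈ t | p x}.ncard := by
  rw [← Set.ncard_union_eq ?_ (Set.toFinite _) (Set.toFinite _)]
  · congr 1
    ext x
    by_cases h : p x <;> simp [h]
  · exact Set.disjoint_left.2 fun x hx hx' => hx.2 hx'.2

lemma cut_with_mem {V : Type*} (G : SimpleGraph V) (A : Set V) (s : V) :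
    {e ∈ G.edgeSet | (∃ u ∈ A, ∃ v ∈ Aᶜ, e = s(u, v)) ∧ s ∈ e}
      = (fun v => s(s, v)) '' {v | G.Adj s v ∧ (v ∈ A ↔ s ∉ A)} := by
  ext e
  constructor
  · rintro ⟨he, ⟨u, hu, v, hv, rfl⟩, hse⟩
    rw [Sym2.mem_iff] at hse
    rcases hse with rfl | rfl
    · exact ⟨v, ⟨G.mem_edgeSet.1 he, by simp_all⟩, rfl⟩
    · exact ⟨u, ⟨(G.mem_edgeSet.1 he).symm, by simp_all⟩, Sym2.eq_swap.symm⟩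
  · rintro ⟨v, ⟨hadj, hiff⟩, rfl⟩
    refine ⟨G.mem_edgeSet.2 hadj, ?_, by simp⟩
    by_cases hsA : s ∈ A
    · exact ⟨s, hsA, v, fun hv => (hiff.1 hv) hsA, rfl⟩
    · exact ⟨v, hiff.2 hsA, s, hsA, Sym2.eq_swap.symm⟩

lemma rest_subset {V : Type*} (G : SimpleGraph V) (A B : Set V) (s : V)
    (h : ∀ v, v ≠ s → (v ∈ A ↔ v ∈ B)) :
    {e ∈ G.edgeSet | (∃ u ∈ A, ∃ v ∈ Aᶜ, e = s(u, v)) ∧ s ∉ e}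
      ⊆ {e ∈ G.edgeSet | (∃ u ∈ B, ∃ v ∈ Bᶜ, e = s(u, v)) ∧ s ∉ e} := by
  rintro e ⟨he, ⟨u, hu, v, hv, rfl⟩, hse⟩
  rw [Sym2.mem_iff] at hse
  push_neg at hse
  refine ⟨he, ⟨u, (h u (Ne.symm hse.1)).1 hu, v, fun hvB => hv ((h v (Ne.symm hse.2)).2 hvB), rfl⟩,
    by rw [Sym2.mem_iff]; push_neg; exact hse⟩

lemma rest_eq {V : Type*} (G : SimpleGraph V) (A B : Set V) (s : V)
    (h : ∀ v, v ≠ s → (v ∈ A ↔ v ∈ B)) :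
    {e ∈ G.edgeSet | (∃ u ∈ A, ∃ v ∈ Aᶜ, e = s(u, v)) ∧ s ∉ e}
      = {e ∈ G.edgeSet | (∃ u ∈ B, ∃ v ∈ Bᶜ, e = s(u, v)) ∧ s ∉ e} :=
  Set.Subset.antisymm (rest_subset G A B s h)
    (rest_subset G B A s fun v hv => (h v hv).symm)

lemma cutSize_eq {V : Type*} [Fintype V] (G : SimpleGraph V) (A : Set V) (s : V) :
    cutSize G A = {e ∈ G.edgeSet | (∃ u ∈ A, ∃ v ∈ Aᶜ, e = s(u, v)) ∧ s ∉ e}.ncard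
      + {v | G.Adj s v ∧ (v ∈ A ↔ s ∉ A)}.ncard := by
  rw [cutSize, ncard_sep_split _ (fun e => s ∈ e)]
  congr 1
  · congr 1
    ext e
    simp [and_assoc]
  · rw [show {x ∈ {e ∈ G.edgeSet | ∃ u ∈ A, ∃ v ∈ Aᶜ, e = s(u, v)} | s ∈ x}
        = {e ∈ G.edgeSet | (∃ u ∈ A, ∃ v ∈ Aᶜ, e = s(u, v)) ∧ s ∈ e} by
        ext e; simp [and_assoc]]
    rw [cut_with_mem]
    exact Set.ncard_image_of_injOn fun a _ b _ h => Sym2.congr_right.mp h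

theorem stmt1 {V : Type*} [Fintype V] (G : SimpleGraph V) (C S : Set V)
    (hpart : C ∪ S = Set.univ) (hdisj : Disjoint C S)
    (hclique : ∀ u ∈ C, ∀ v ∈ C, u ≠ v → G.Adj u v)
    (hindep : ∀ u ∈ S, ∀ v ∈ S, ¬ G.Adj u v)
    (hSC : ∀ s ∈ S, ∀ v : V, G.Adj s v ↔ v ∈ C)
    (hodd : Odd C.ncard)
    (A : Set V) (hmax : IsMaxCut G A) :
    (∀ s ∈ S, s ∈ A) ∨ (∀ s ∈ S, s ∉ A) := by
  by_contra h
  push_neg at h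
  obtain ⟨⟨s₁, hs₁S, hs₁A⟩, s₂, hs₂S, hs₂A⟩ := h
  have hs₁C : s₁ ∉ C := fun hc => Set.disjoint_left.mp hdisj hc hs₁S
  have hs₂C : s₂ ∉ C := fun hc => Set.disjoint_left.mp hdisj hc hs₂S
  -- Inequality 1: remove s₂ from A
  have key1 : (C ∩ A).ncard ≤ (C \ A).ncard := by
    have h1 := hmax (A \ {s₂})
    rw [cutSize_eq G A s₂, cutSize_eq G (A \ {s₂}) s₂,
      rest_eq G (A \ {s₂}) A s₂ (fun v hv => by simp [hv])] at h1
    have e1 : {v | G.Adj s₂ v ∧ (v ∈ A ↔ s₂ ∉ A)} = C \ A := by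
      ext v
      simp only [Set.mem_setOf_eq, hSC s₂ hs₂S, hs₂A, Set.mem_diff]
      tauto
    have e2 : {v | G.Adj s₂ v ∧ (v ∈ A \ {s₂} ↔ s₂ ∉ A \ {s₂})} = C ∩ A := by
      ext v
      simp only [Set.mem_setOf_eq, hSC s₂ hs₂S, Set.mem_diff, Set.mem_singleton_iff,
        Set.mem_inter_iff]
      constructor
      · rintro ⟨hvC, hiff⟩
        exact ⟨hvC, (hiff.2 (by tauto)).1⟩
      · rintro ⟨hvC, hvA⟩
        exact ⟨hvC, by constructor <;> intro <;> [tauto; exact ⟨hvA, fun hvs => hs₂C (hvs ▸ hvC)⟩]⟩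
    rw [e1, e2] at h1
    omega
  -- Inequality 2: insert s₁ into A
  have key2 : (C \ A).ncard ≤ (C ∩ A).ncard := by
    have h2 := hmax (insert s₁ A)
    rw [cutSize_eq G A s₁, cutSize_eq G (insert s₁ A) s₁,
      rest_eq G (insert s₁ A) A s₁ (fun v hv => by simp [hv])] at h2
    have e1 : {v | G.Adj s₁ v ∧ (v ∈ A ↔ s₁ ∉ A)} = C ∩ A := by
      ext v
      simp only [Set.mem_setOf_eq, hSC s₁ hs₁S, hs₁A, Set.mem_inter_iff]
      tauto
    have e2 : {v | G.Adj s₁ v ∧ (v ∈ insert s₁ A ↔ s₁ ∉ insert s₁ A)} = C \ A := by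
      ext v
      simp only [Set.mem_setOf_eq, hSC s₁ hs₁S, Set.mem_insert_iff, Set.mem_diff]
      have hvne : ∀ v, v ∈ C → v ≠ s₁ := fun v hv hh => hs₁C (hh ▸ hv)
      constructor
      · rintro ⟨hvC, hiff⟩
        exact ⟨hvC, fun hvA => by tauto⟩
      · rintro ⟨hvC, hvA⟩
        have := hvne v hvC
        exact ⟨hvC, by tauto⟩
    rw [e1, e2] at h2
    omega
  have hsum : (C ∩ A).ncard + (C \ A).ncard = C.ncard :=
    Set.ncard_inter_add_ncard_diff_eq_ncard C A (Set.toFinite C)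
  obtain ⟨k, hk⟩ := hodd
  omega
end

section
/- Consider the gadget graph with q left long vertices, q right long vertices (the 2q long vertices forming a clique), p left short vertices each adjacent exactly to all left long vertices, and p right short vertices each adjacent exactly to all right long vertices, where p > 2q. Then in any maximum cut of this gadget, all left long vertices lie in one part together with all right short vertices, and all right long vertices lie in the other part together with all left short vertices; in particular the maximum cut has size exactly 2pq + q^2. -/
/-- The gadget graph: a clique on `2q` long vertices (`q` left long and `q` right long),
`p` left short vertices each adjacent exactly to the left long vertices, and
`p` right short vertices each adjacent exactly to the right long vertices. -/
def Gadget (q p : ℕ) : SimpleGraph ((Fin q ⊕ Fin q) ⊕ (Fin p ⊕ Fin p)) :=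
  SimpleGraph.fromRel fun u v =>
    match u, v with
    | Sum.inl _, Sum.inl _ => True
    | Sum.inl (Sum.inl _), Sum.inr (Sum.inl _) => True
    | Sum.inl (Sum.inr _), Sum.inr (Sum.inr _) => True
    | _, _ => False

/-- The set consisting of all left long vertices and all right short vertices. -/
def cutA (q p : ℕ) : Set ((Fin q ⊕ Fin q) ⊕ (Fin p ⊕ Fin p)) :=
  {v | match v with
       | Sum.inl (Sum.inl _) => True
       | Sum.inr (Sum.inr _) => True
       | _ => False}

open Finset

theorem cutSize_eq_card {V : Type*} [Fintype V] [DecidableEq V] (G : SimpleGraph V) [DecidableRel G.Adj]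
    (A : Set V) [DecidablePred (· ∈ A)] :
    cutSize G A = (univ.filter (fun x : V × V => G.Adj x.1 x.2 ∧ x.1 ∈ A ∧ x.2 ∉ A)).card := by
  rw [cutSize]
  have himg : {e ∈ G.edgeSet | ∃ u ∈ A, ∃ v ∈ Aᶜ, e = s(u, v)} =
      (fun x : V × V => s(x.1, x.2)) '' ↑(univ.filter (fun x : V × V => G.Adj x.1 x.2 ∧ x.1 ∈ A ∧ x.2 ∉ A)) := by
    ext e
    simp only [Set.mem_setOf_eq, Set.mem_image, Finset.coe_filter, Finset.mem_univ, true_and,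
      Set.mem_compl_iff]
    constructor
    · rintro ⟨he, u, hu, v, hv, rfl⟩
      exact ⟨(u, v), ⟨he, hu, hv⟩, rfl⟩
    · rintro ⟨⟨u, v⟩, ⟨ha, hu, hv⟩, rfl⟩
      exact ⟨ha, u, hu, v, hv, rfl⟩
  rw [himg, Set.ncard_image_of_injOn, Set.ncard_coe_finset]
  rintro ⟨u, v⟩ hu ⟨u', v'⟩ hv h
  simp only [Finset.coe_filter, Set.mem_setOf_eq] at hu hv
  simp only [Sym2.eq, Sym2.rel_iff'] at h
  obtain ⟨-, hu1, hu2, hu3⟩ := hu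
  obtain ⟨-, hv1, hv2, hv3⟩ := hv
  rcases h with h | h
  · simpa using h
  · simp only [Prod.swap_prod_mk, Prod.mk.injEq] at h
    exact absurd (h.2.symm ▸ hv2) hu3


-- counting helper
theorem count_notin {n : ℕ} (P : Fin n → Prop) [DecidablePred P] :
    ∑ k : Fin n, (if ¬ P k then 1 else 0) = n - (univ.filter P).card := by
  rw [← Finset.card_filter]
  have := Finset.card_filter_add_card_filter_not (s := (univ : Finset (Fin n))) (p := P)
  simp only [Finset.card_univ, Fintype.card_fin] at this
  omega

theorem count_notin' {n : ℕ} (P Q : Fin n → Prop) [DecidablePred P] [DecidablePred Q]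
    (h : ∀ k, ¬ P k → Q k) :
    ∑ k : Fin n, (if Q k ∧ ¬ P k then 1 else 0) = n - (univ.filter P).card := by
  rw [← count_notin P]
  refine Finset.sum_congr rfl fun k _ => ?_
  by_cases hk : P k <;> simp [hk, h k]

abbrev VV (q p : ℕ) := (Fin q ⊕ Fin q) ⊕ (Fin p ⊕ Fin p)

section
variable (q p : ℕ) (A : Set (VV q p)) [DecidablePred (· ∈ A)] [DecidableRel (Gadget q p).Adj]

theorem rowLL (i : Fin q) :
    (∑ v : VV q p, if (Gadget q p).Adj (Sum.inl (Sum.inl i)) v ∧ (Sum.inl (Sum.inl i)) ∈ A ∧ v ∉ A then 1 else 0)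
    = if (Sum.inl (Sum.inl i) : VV q p) ∈ A then
        (q - (univ.filter fun k : Fin q => (Sum.inl (Sum.inl k) : VV q p) ∈ A).card)
        + (q - (univ.filter fun k : Fin q => (Sum.inl (Sum.inr k) : VV q p) ∈ A).card)
        + (p - (univ.filter fun k : Fin p => (Sum.inr (Sum.inl k) : VV q p) ∈ A).card)
      else 0 := by
  by_cases hi : (Sum.inl (Sum.inl i) : VV q p) ∈ A
  · simp only [hi, if_true, true_and]
    simp only [Fintype.sum_sum_type]
    simp only [Gadget, SimpleGraph.fromRel_adj, ne_eq, Sum.inl.injEq, Sum.inr.injEq,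
      not_false_eq_true, true_and, and_true, false_and, if_false, Finset.sum_const_zero,
      reduceCtorEq, not_true_eq_false, or_false, false_or, and_false, or_self, iff_true, true_or]
    rw [count_notin' (fun k : Fin q => (Sum.inl (Sum.inl k) : VV q p) ∈ A)
        (fun k : Fin q => ¬ i = k) (fun k hk h => hk (h ▸ hi)),
      count_notin (fun k : Fin q => (Sum.inl (Sum.inr k) : VV q p) ∈ A),
      count_notin (fun k : Fin p => (Sum.inr (Sum.inl k) : VV q p) ∈ A)]
    omega
  · simp [hi]

theorem rowLR (i : Fin q) :
    (∑ v : VV q p, if (Gadget q p).Adj (Sum.inl (Sum.inr i)) v ∧ (Sum.inl (Sum.inr i)) ∈ A ∧ v ∉ A then 1 else 0)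
    = if (Sum.inl (Sum.inr i) : VV q p) ∈ A then
        (q - (univ.filter fun k : Fin q => (Sum.inl (Sum.inl k) : VV q p) ∈ A).card)
        + (q - (univ.filter fun k : Fin q => (Sum.inl (Sum.inr k) : VV q p) ∈ A).card)
        + (p - (univ.filter fun k : Fin p => (Sum.inr (Sum.inr k) : VV q p) ∈ A).card)
      else 0 := by
  by_cases hi : (Sum.inl (Sum.inr i) : VV q p) ∈ A
  · simp only [hi, if_true, true_and]
    simp only [Fintype.sum_sum_type]
    simp only [Gadget, SimpleGraph.fromRel_adj, ne_eq, Sum.inl.injEq, Sum.inr.injEq,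
      not_false_eq_true, true_and, and_true, false_and, if_false, Finset.sum_const_zero,
      reduceCtorEq, not_true_eq_false, or_false, false_or, and_false, or_self, iff_true, true_or]
    rw [count_notin (fun k : Fin q => (Sum.inl (Sum.inl k) : VV q p) ∈ A),
      count_notin' (fun k : Fin q => (Sum.inl (Sum.inr k) : VV q p) ∈ A)
        (fun k : Fin q => ¬ i = k) (fun k hk h => hk (h ▸ hi)),
      count_notin (fun k : Fin p => (Sum.inr (Sum.inr k) : VV q p) ∈ A)]
    omega
  · simp [hi]

theorem rowSL (j : Fin p) :
    (∑ v : VV q p, if (Gadget q p).Adj (Sum.inr (Sum.inl j)) v ∧ (Sum.inr (Sum.inl j)) ∈ A ∧ v ∉ A then 1 else 0)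
    = if (Sum.inr (Sum.inl j) : VV q p) ∈ A then
        (q - (univ.filter fun k : Fin q => (Sum.inl (Sum.inl k) : VV q p) ∈ A).card)
      else 0 := by
  by_cases hi : (Sum.inr (Sum.inl j) : VV q p) ∈ A
  · simp only [hi, if_true, true_and]
    simp only [Fintype.sum_sum_type]
    simp only [Gadget, SimpleGraph.fromRel_adj, ne_eq, Sum.inl.injEq, Sum.inr.injEq,
      not_false_eq_true, true_and, and_true, false_and, if_false, Finset.sum_const_zero,
      reduceCtorEq, not_true_eq_false, or_false, false_or, and_false, or_self, iff_true, true_or]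
    rw [count_notin (fun k : Fin q => (Sum.inl (Sum.inl k) : VV q p) ∈ A)]
    omega
  · simp [hi]

theorem rowSR (j : Fin p) :
    (∑ v : VV q p, if (Gadget q p).Adj (Sum.inr (Sum.inr j)) v ∧ (Sum.inr (Sum.inr j)) ∈ A ∧ v ∉ A then 1 else 0)
    = if (Sum.inr (Sum.inr j) : VV q p) ∈ A then
        (q - (univ.filter fun k : Fin q => (Sum.inl (Sum.inr k) : VV q p) ∈ A).card)
      else 0 := by
  by_cases hi : (Sum.inr (Sum.inr j) : VV q p) ∈ A
  · simp only [hi, if_true, true_and]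
    simp only [Fintype.sum_sum_type]
    simp only [Gadget, SimpleGraph.fromRel_adj, ne_eq, Sum.inl.injEq, Sum.inr.injEq,
      not_false_eq_true, true_and, and_true, false_and, if_false, Finset.sum_const_zero,
      reduceCtorEq, not_true_eq_false, or_false, false_or, and_false, or_self, iff_true, true_or]
    rw [count_notin (fun k : Fin q => (Sum.inl (Sum.inr k) : VV q p) ∈ A)]
    omega
  · simp [hi]

theorem gadget_cutSize :
    cutSize (Gadget q p) A =
      (univ.filter fun k : Fin q => (Sum.inl (Sum.inl k) : VV q p) ∈ A).card *
        ((q - (univ.filter fun k : Fin q => (Sum.inl (Sum.inl k) : VV q p) ∈ A).card)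
          + (q - (univ.filter fun k : Fin q => (Sum.inl (Sum.inr k) : VV q p) ∈ A).card)
          + (p - (univ.filter fun k : Fin p => (Sum.inr (Sum.inl k) : VV q p) ∈ A).card))
      + (univ.filter fun k : Fin q => (Sum.inl (Sum.inr k) : VV q p) ∈ A).card *
        ((q - (univ.filter fun k : Fin q => (Sum.inl (Sum.inl k) : VV q p) ∈ A).card)
          + (q - (univ.filter fun k : Fin q => (Sum.inl (Sum.inr k) : VV q p) ∈ A).card)
          + (p - (univ.filter fun k : Fin p => (Sum.inr (Sum.inr k) : VV q p) ∈ A).card))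
      + (univ.filter fun k : Fin p => (Sum.inr (Sum.inl k) : VV q p) ∈ A).card *
          (q - (univ.filter fun k : Fin q => (Sum.inl (Sum.inl k) : VV q p) ∈ A).card)
      + (univ.filter fun k : Fin p => (Sum.inr (Sum.inr k) : VV q p) ∈ A).card *
          (q - (univ.filter fun k : Fin q => (Sum.inl (Sum.inr k) : VV q p) ∈ A).card) := by
  rw [cutSize_eq_card, Finset.card_filter, ← Finset.univ_product_univ, Finset.sum_product]
  rw [Fintype.sum_sum_type, Fintype.sum_sum_type, Fintype.sum_sum_type]
  dsimp only
  simp only [rowLL q p A, rowLR q p A, rowSL q p A, rowSR q p A]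
  simp only [← Finset.sum_filter, Finset.sum_const, smul_eq_mul]
  omega
end


theorem arith_key (q p a b c d : ℤ) (hq : 0 < q) (hp : 0 < p)
    (ha : 0 ≤ a) (ha' : a ≤ q) (hb : 0 ≤ b) (hb' : b ≤ q)
    (hc : 0 ≤ c) (hc' : c ≤ p) (hd : 0 ≤ d) (hd' : d ≤ p) :
    a*((q-a)+(q-b)+(p-c)) + b*((q-a)+(q-b)+(p-d)) + c*(q-a) + d*(q-b) ≤ 2*p*q + q^2 ∧
    (a*((q-a)+(q-b)+(p-c)) + b*((q-a)+(q-b)+(p-d)) + c*(q-a) + d*(q-b) = 2*p*q + q^2 →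
      (a = q ∧ b = 0 ∧ c = 0 ∧ d = p) ∨ (a = 0 ∧ b = q ∧ c = p ∧ d = 0)) := by
  have key : 2*p*q + q^2 - (a*((q-a)+(q-b)+(p-c)) + b*((q-a)+(q-b)+(p-d)) + c*(q-a) + d*(q-b))
      = (q-a-b)^2 + ((p-c)*(q-a) + c*a) + ((p-d)*(q-b) + d*b) := by ring
  have h1 : 0 ≤ (q-a-b)^2 := sq_nonneg _
  have h2 : 0 ≤ (p-c)*(q-a) := mul_nonneg (by linarith) (by linarith)
  have h3 : 0 ≤ c*a := mul_nonneg hc ha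
  have h4 : 0 ≤ (p-d)*(q-b) := mul_nonneg (by linarith) (by linarith)
  have h5 : 0 ≤ d*b := mul_nonneg hd hb
  constructor
  · linarith
  · intro he
    have e1 : (q-a-b)^2 = 0 := by nlinarith
    have e2 : (p-c)*(q-a) = 0 := by nlinarith
    have e3 : c*a = 0 := by nlinarith
    have e4 : (p-d)*(q-b) = 0 := by nlinarith
    have e5 : d*b = 0 := by nlinarith
    have e1' : q - a - b = 0 := by
      have := sq_eq_zero_iff.mp e1; linarith [this]
    rcases mul_eq_zero.mp e2 with h | h <;> rcases mul_eq_zero.mp e3 with h' | h' <;>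
      rcases mul_eq_zero.mp e4 with h'' | h'' <;> rcases mul_eq_zero.mp e5 with h''' | h''' <;>
      omega

theorem stmt4 (q p : ℕ) (hq : 0 < q) (hp : 2 * q < p)
    (A : Set ((Fin q ⊕ Fin q) ⊕ (Fin p ⊕ Fin p)))
    (hmax : IsMaxCut (Gadget q p) A) :
    (A = cutA q p ∨ A = (cutA q p)ᶜ) ∧
      cutSize (Gadget q p) A = 2 * p * q + q ^ 2 := by
  classical
  have hF := gadget_cutSize q p A
  set a := (univ.filter fun k : Fin q => (Sum.inl (Sum.inl k) : VV q p) ∈ A).card with ha_def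
  set b := (univ.filter fun k : Fin q => (Sum.inl (Sum.inr k) : VV q p) ∈ A).card with hb_def
  set c := (univ.filter fun k : Fin p => (Sum.inr (Sum.inl k) : VV q p) ∈ A).card with hc_def
  set d := (univ.filter fun k : Fin p => (Sum.inr (Sum.inr k) : VV q p) ∈ A).card with hd_def
  have ha : a ≤ q := by
    rw [ha_def]
    exact (Finset.card_filter_le univ fun k : Fin q => (Sum.inl (Sum.inl k) : VV q p) ∈ A).trans
      (by simp)
  have hb : b ≤ q := by
    rw [hb_def]
    exact (Finset.card_filter_le univ fun k : Fin q => (Sum.inl (Sum.inr k) : VV q p) ∈ A).trans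
      (by simp)
  have hc : c ≤ p := by
    rw [hc_def]
    exact (Finset.card_filter_le univ fun k : Fin p => (Sum.inr (Sum.inl k) : VV q p) ∈ A).trans
      (by simp)
  have hd : d ≤ p := by
    rw [hd_def]
    exact (Finset.card_filter_le univ fun k : Fin p => (Sum.inr (Sum.inr k) : VV q p) ∈ A).trans
      (by simp)
  -- value of the cut cutA
  have hcut : cutSize (Gadget q p) (cutA q p) = 2 * p * q + q ^ 2 := by
    have h := gadget_cutSize q p (cutA q p)
    simp only [cutA, Set.mem_setOf_eq, Finset.filter_true, Finset.filter_false,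
      Finset.card_univ, Fintype.card_fin, Finset.card_empty] at h
    simp only [cutA]
    rw [h]
    simp only [Nat.sub_self, Nat.sub_zero]
    ring
  have hge : 2 * p * q + q ^ 2 ≤ cutSize (Gadget q p) A := hcut ▸ hmax (cutA q p)
  -- the arithmetic bound, via ℤ
  have hp' : 0 < p := by omega
  have hZ := arith_key q p a b c d (by exact_mod_cast hq) (by exact_mod_cast hp')
    (by positivity) (by exact_mod_cast ha) (by positivity) (by exact_mod_cast hb)
    (by positivity) (by exact_mod_cast hc) (by positivity) (by exact_mod_cast hd)
  have hcast : ((a*((q-a)+(q-b)+(p-c)) + b*((q-a)+(q-b)+(p-d)) + c*(q-a) + d*(q-b) : ℕ) : ℤ)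
      = (a:ℤ)*(((q:ℤ)-a)+((q:ℤ)-b)+((p:ℤ)-c)) + (b:ℤ)*(((q:ℤ)-a)+((q:ℤ)-b)+((p:ℤ)-d))
        + (c:ℤ)*((q:ℤ)-a) + (d:ℤ)*((q:ℤ)-b) := by
    push_cast [Nat.cast_sub ha, Nat.cast_sub hb, Nat.cast_sub hc, Nat.cast_sub hd]
    ring
  have hle : cutSize (Gadget q p) A ≤ 2 * p * q + q ^ 2 := by
    rw [hF]
    have := hZ.1
    rw [← hcast] at this
    exact_mod_cast this
  have heqn : cutSize (Gadget q p) A = 2 * p * q + q ^ 2 := le_antisymm hle hge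
  refine ⟨?_, heqn⟩
  -- equality case for the arithmetic
  have heqZ : (a:ℤ)*(((q:ℤ)-a)+((q:ℤ)-b)+((p:ℤ)-c)) + (b:ℤ)*(((q:ℤ)-a)+((q:ℤ)-b)+((p:ℤ)-d))
      + (c:ℤ)*((q:ℤ)-a) + (d:ℤ)*((q:ℤ)-b) = 2*(p:ℤ)*(q:ℤ) + (q:ℤ)^2 := by
    rw [← hcast]
    have : (a*((q-a)+(q-b)+(p-c)) + b*((q-a)+(q-b)+(p-d)) + c*(q-a) + d*(q-b) : ℕ)
        = 2 * p * q + q ^ 2 := by rw [← hF]; exact heqn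
    rw [this]; push_cast; ring
  rcases hZ.2 heqZ with ⟨e1, e2, e3, e4⟩ | ⟨e1, e2, e3, e4⟩
  · -- A = cutA
    left
    have ea : a = q := by exact_mod_cast e1
    have eb : b = 0 := by exact_mod_cast e2
    have ec : c = 0 := by exact_mod_cast e3
    have ed : d = p := by exact_mod_cast e4
    have fa : (univ.filter fun k : Fin q => (Sum.inl (Sum.inl k) : VV q p) ∈ A) = univ :=
      Finset.eq_univ_of_card _ (by simp [← ha_def, ea])
    have fd : (univ.filter fun k : Fin p => (Sum.inr (Sum.inr k) : VV q p) ∈ A) = univ :=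
      Finset.eq_univ_of_card _ (by simp [← hd_def, ed])
    have fb : (univ.filter fun k : Fin q => (Sum.inl (Sum.inr k) : VV q p) ∈ A) = ∅ :=
      Finset.card_eq_zero.mp (by rw [← hb_def]; exact eb)
    have fc : (univ.filter fun k : Fin p => (Sum.inr (Sum.inl k) : VV q p) ∈ A) = ∅ :=
      Finset.card_eq_zero.mp (by rw [← hc_def]; exact ec)
    ext v
    rcases v with (i | i) | (j | j)
    · simp only [cutA, Set.mem_setOf_eq]
      have := fa ▸ Finset.mem_univ i
      simpa using (Finset.mem_filter.mp this).2
    · simp only [cutA, Set.mem_setOf_eq]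
      constructor
      · intro h
        have : i ∈ (univ.filter fun k : Fin q => (Sum.inl (Sum.inr k) : VV q p) ∈ A) :=
          Finset.mem_filter.mpr ⟨Finset.mem_univ _, h⟩
        rw [fb] at this
        simpa using this
      · intro h; exact absurd h (by simp)
    · simp only [cutA, Set.mem_setOf_eq]
      constructor
      · intro h
        have : j ∈ (univ.filter fun k : Fin p => (Sum.inr (Sum.inl k) : VV q p) ∈ A) :=
          Finset.mem_filter.mpr ⟨Finset.mem_univ _, h⟩
        rw [fc] at this
        simpa using this
      · intro h; exact absurd h (by simp)
    · simp only [cutA, Set.mem_setOf_eq]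
      have := fd ▸ Finset.mem_univ j
      simpa using (Finset.mem_filter.mp this).2
  · -- A = (cutA)ᶜ
    right
    have ea : a = 0 := by exact_mod_cast e1
    have eb : b = q := by exact_mod_cast e2
    have ec : c = p := by exact_mod_cast e3
    have ed : d = 0 := by exact_mod_cast e4
    have fb : (univ.filter fun k : Fin q => (Sum.inl (Sum.inr k) : VV q p) ∈ A) = univ :=
      Finset.eq_univ_of_card _ (by simp [← hb_def, eb])
    have fc : (univ.filter fun k : Fin p => (Sum.inr (Sum.inl k) : VV q p) ∈ A) = univ :=
      Finset.eq_univ_of_card _ (by simp [← hc_def, ec])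
    have fa : (univ.filter fun k : Fin q => (Sum.inl (Sum.inl k) : VV q p) ∈ A) = ∅ :=
      Finset.card_eq_zero.mp (by rw [← ha_def]; exact ea)
    have fd : (univ.filter fun k : Fin p => (Sum.inr (Sum.inr k) : VV q p) ∈ A) = ∅ :=
      Finset.card_eq_zero.mp (by rw [← hd_def]; exact ed)
    ext v
    rcases v with (i | i) | (j | j)
    · simp only [cutA, Set.mem_compl_iff, Set.mem_setOf_eq]
      constructor
      · intro h
        have : i ∈ (univ.filter fun k : Fin q => (Sum.inl (Sum.inl k) : VV q p) ∈ A) :=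
          Finset.mem_filter.mpr ⟨Finset.mem_univ _, h⟩
        rw [fa] at this
        simpa using this
      · intro h; exact absurd trivial h
    · simp only [cutA, Set.mem_compl_iff, Set.mem_setOf_eq]
      have := fb ▸ Finset.mem_univ i
      constructor
      · intro _; simp
      · intro _; exact (Finset.mem_filter.mp this).2
    · simp only [cutA, Set.mem_compl_iff, Set.mem_setOf_eq]
      have := fc ▸ Finset.mem_univ j
      constructor
      · intro _; simp
      · intro _; exact (Finset.mem_filter.mp this).2
    · simp only [cutA, Set.mem_compl_iff, Set.mem_setOf_eq]
      constructor
      · intro h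
        have : j ∈ (univ.filter fun k : Fin p => (Sum.inr (Sum.inr k) : VV q p) ∈ A) :=
          Finset.mem_filter.mpr ⟨Finset.mem_univ _, h⟩
        rw [fd] at this
        simpa using this
      · intro h; exact absurd trivial h
end
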